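/- Uniqueness for regular linear constant-coefficient differential-algebraic equations (Proposition 1 / Corollary 1, sufficiency): Let D, M ∈ ℂ^{k×k} be such that the pencil sD − M is regular, let f : [a,b] → ℂ^k, and let ξ₁, ξ₂ : [a,b] → ℂ^k be k-times continuously differentiable functions satisfying D ξ_j'(t) = M ξ_j(t) + f(t) for all t ∈ [a,b] (j = 1, 2) and ξ₁(a) = ξ₂(a). Then ξ₁(t) = ξ₂(t) for all t ∈ [a,b]. -/

import Mathlib

open Set intervalIntegral Polynomial

theorem mulVec_hasDerivWithinAt {k : ℕ} (A : Matrix (Fin k) (Fin k) ℂ)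
    {w : ℝ → (Fin k → ℂ)} {ω : Fin k → ℂ} {s : Set ℝ} {t : ℝ}
    (h : HasDerivWithinAt w ω s t) :
    HasDerivWithinAt (fun t => A.mulVec (w t)) (A.mulVec ω) s t := by
  have := ((A.mulVecLin.toContinuousLinearMap.restrictScalars ℝ).hasFDerivAt
    (x := w t)).comp_hasDerivWithinAt t h
  simpa [Function.comp_def] using this

theorem mulVec_continuousOn {k : ℕ} (A : Matrix (Fin k) (Fin k) ℂ)
    {w : ℝ → (Fin k → ℂ)} {s : Set ℝ} (h : ContinuousOn w s) :
    ContinuousOn (fun t => A.mulVec (w t)) s :=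
  A.mulVecLin.toContinuousLinearMap.continuous.comp_continuousOn h

theorem sum_mulVec' {k : ℕ} {ι : Type*} (s : Finset ι) (f : ι → Matrix (Fin k) (Fin k) ℂ)
    (v : Fin k → ℂ) : (∑ i ∈ s, f i).mulVec v = ∑ i ∈ s, (f i).mulVec v := by
  classical
  induction s using Finset.induction_on with
  | empty => simp [Matrix.zero_mulVec]
  | insert _ _ h ih => simp [Finset.sum_insert h, Matrix.add_mulVec, ih]

/-- **uniqueness for regular linear constant-coefficient DAEs.**
If the pencil `s D - M` is regular, `f : [a,b] → ℂ^k`, and `ξ₁, ξ₂` are `k`-times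
continuously differentiable solutions of `D ξ' = M ξ + f` on `[a,b]` with
`ξ₁(a) = ξ₂(a)`, then `ξ₁ = ξ₂` on `[a,b]`. -/
theorem regular_dae_uniqueness
    {k : ℕ} (D M : Matrix (Fin k) (Fin k) ℂ)
    (hreg : ∃ s₀ : ℂ, (s₀ • D - M).det ≠ 0)
    (a b : ℝ) (hab : a ≤ b) (f : ℝ → (Fin k → ℂ))
    (ξ₁ ξ₂ : ℝ → (Fin k → ℂ))
    (hξ₁ : ContDiffOn ℝ k ξ₁ (Set.Icc a b))
    (hξ₂ : ContDiffOn ℝ k ξ₂ (Set.Icc a b))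
    (hdae₁ : ∀ t ∈ Set.Icc a b,
      D.mulVec (derivWithin ξ₁ (Set.Icc a b) t) = M.mulVec (ξ₁ t) + f t)
    (hdae₂ : ∀ t ∈ Set.Icc a b,
      D.mulVec (derivWithin ξ₂ (Set.Icc a b) t) = M.mulVec (ξ₂ t) + f t)
    (hinit : ξ₁ a = ξ₂ a) :
    ∀ t ∈ Set.Icc a b, ξ₁ t = ξ₂ t := by
  rcases Nat.eq_zero_or_pos k with hk0 | hk
  · subst hk0; intro t _; exact Subsingleton.elim _ _
  rcases eq_or_lt_of_le hab with rfl | hab'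
  · intro t ht
    have : t = a := le_antisymm ht.2 ht.1
    rw [this, hinit]
  obtain ⟨s₀, hs⟩ := hreg
  have hus : UniqueDiffOn ℝ (Icc a b) := uniqueDiffOn_Icc hab'
  set E : Matrix (Fin k) (Fin k) ℂ := s₀ • D - M with hE
  have hEinv : IsUnit E.det := isUnit_iff_ne_zero.mpr hs
  set B : Matrix (Fin k) (Fin k) ℂ := -(E⁻¹ * D) with hB
  set ζ : ℝ → Fin k → ℂ := fun t => ξ₁ t - ξ₂ t with hζ
  set w : ℝ → Fin k → ℂ := fun t => Complex.exp (-s₀ * t) • ζ t with hw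
  set ω : ℝ → Fin k → ℂ := fun t => Complex.exp (-s₀ * t) •
      (derivWithin ξ₁ (Icc a b) t - derivWithin ξ₂ (Icc a b) t)
      + (-s₀ * Complex.exp (-s₀ * t)) • ζ t with hω
  have hk1 : (1 : WithTop ℕ∞) ≤ (k : ℕ) := by exact_mod_cast hk
  have hdiff₁ : ∀ t ∈ Icc a b,
      HasDerivWithinAt ξ₁ (derivWithin ξ₁ (Icc a b) t) (Icc a b) t :=
    fun t ht => ((hξ₁.differentiableOn (by exact_mod_cast hk.ne')) t ht).hasDerivWithinAt
  have hdiff₂ : ∀ t ∈ Icc a b,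
      HasDerivWithinAt ξ₂ (derivWithin ξ₂ (Icc a b) t) (Icc a b) t :=
    fun t ht => ((hξ₂.differentiableOn (by exact_mod_cast hk.ne')) t ht).hasDerivWithinAt
  have hexp : ∀ t : ℝ, HasDerivAt (fun t : ℝ => Complex.exp (-s₀ * t))
      (-s₀ * Complex.exp (-s₀ * t)) t := by
    intro t
    have h1 : HasDerivAt (fun t : ℝ => -s₀ * (t : ℂ)) (-s₀) t := by
      simpa using (Complex.ofRealCLM.hasDerivAt (x := t)).const_mul (-s₀)
    simpa [mul_comm] using h1.cexp
  have hwderiv : ∀ t ∈ Icc a b, HasDerivWithinAt w (ω t) (Icc a b) t := by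
    intro t ht
    exact (hexp t).hasDerivWithinAt.smul ((hdiff₁ t ht).sub (hdiff₂ t ht))
  have hcancel : ∀ x y : Fin k → ℂ, E.mulVec x = E.mulVec y → x = y := by
    intro x y hxy
    have := congrArg (E⁻¹.mulVec) hxy
    simpa [Matrix.mulVec_mulVec, Matrix.nonsing_inv_mul E hEinv, Matrix.one_mulVec] using this
  have hkey : ∀ t ∈ Icc a b, B.mulVec (ω t) = w t := by
    intro t ht
    have hDζ : D.mulVec (derivWithin ξ₁ (Icc a b) t - derivWithin ξ₂ (Icc a b) t)
        = M.mulVec (ζ t) := by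
      rw [Matrix.mulVec_sub, hdae₁ t ht, hdae₂ t ht, hζ]
      simp [Matrix.mulVec_sub]
    apply hcancel
    have hEB : ∀ x : Fin k → ℂ, E.mulVec (B.mulVec x) = -(D.mulVec x) := by
      intro x
      rw [hB, Matrix.neg_mulVec, Matrix.mulVec_neg, Matrix.mulVec_mulVec,
        ← Matrix.mul_assoc, Matrix.mul_nonsing_inv E hEinv, Matrix.one_mul]
    rw [hEB]
    rw [hω, hw]
    rw [Matrix.mulVec_add, Matrix.mulVec_smul, Matrix.mulVec_smul, Matrix.mulVec_smul, hDζ]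
    rw [hE, Matrix.sub_mulVec, Matrix.smul_mulVec]
    module
  have hw0 : w a = 0 := by simp [hw, hζ, hinit]
  have hwc : ContinuousOn w (Icc a b) := by
    show ContinuousOn (fun t : ℝ => Complex.exp (-s₀ * t) • (ξ₁ t - ξ₂ t)) (Icc a b)
    exact (Complex.continuous_exp.comp (f := fun t : ℝ => -s₀ * t) (by fun_prop)).continuousOn.smul
      ((hξ₁.continuousOn).sub (hξ₂.continuousOn))
  -- Step 1: iterated integral identity
  have hint : ∀ n : ℕ, ∀ t ∈ Icc a b,
      (∫ s in a..t, (B ^ n).mulVec (w s)) = (B ^ (n + 1)).mulVec (w t) := by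
    intro n t ht
    have hat : Icc a t ⊆ Icc a b := Icc_subset_Icc le_rfl ht.2
    have h1 : ∀ x ∈ Ioo a t, HasDerivWithinAt (fun τ => (B ^ (n + 1)).mulVec (w τ))
        ((B ^ n).mulVec (w x)) (Ioi x) x := by
      intro x hx
      have hx' : x ∈ Icc a b := ⟨hx.1.le, hx.2.le.trans ht.2⟩
      have hmem : Icc a b ∈ nhds x := Icc_mem_nhds hx.1 (lt_of_lt_of_le hx.2 ht.2)
      have hd := (mulVec_hasDerivWithinAt (B ^ (n + 1)) (hwderiv x hx')).hasDerivAt hmem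
      have heq : (B ^ (n + 1)).mulVec (ω x) = (B ^ n).mulVec (w x) := by
        rw [pow_succ, ← Matrix.mulVec_mulVec, hkey x hx']
      exact (heq ▸ hd).hasDerivWithinAt
    have hcont : ContinuousOn (fun τ => (B ^ (n + 1)).mulVec (w τ)) (Icc a t) :=
      (mulVec_continuousOn _ hwc).mono hat
    have hint' : IntervalIntegrable (fun s => (B ^ n).mulVec (w s))
        MeasureTheory.volume a t := by
      apply ContinuousOn.intervalIntegrable
      exact ((mulVec_continuousOn _ hwc).mono hat).mono (by rw [uIcc_of_le ht.1])
    rw [intervalIntegral.integral_eq_sub_of_hasDeriv_right_of_le ht.1 hcont h1 hint',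
      hw0, Matrix.mulVec_zero, sub_zero]
  -- Step 2: Cayley-Hamilton
  have hpm : B.charpoly.Monic := Matrix.charpoly_monic B
  have hp0 : B.charpoly ≠ 0 := hpm.ne_zero
  set m : ℕ := B.charpoly.rootMultiplicity 0 with hm
  obtain ⟨q, hpq, hqnd⟩ := B.charpoly.exists_eq_pow_rootMultiplicity_mul_and_not_dvd hp0 0
  have hq0 : q.coeff 0 ≠ 0 := by
    intro h
    apply hqnd
    simpa using Polynomial.X_dvd_iff.mpr h
  set d : ℕ := q.natDegree with hd
  set c : ℕ → ℂ := fun j => q.coeff j with hc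
  have hrel : ∀ t ∈ Icc a b,
      ∑ j ∈ Finset.range (d + 1), c j • (B ^ (m + j)).mulVec (w t) = 0 := by
    intro t ht
    have hCH : (Polynomial.aeval B) B.charpoly = 0 := Matrix.aeval_self_charpoly B
    have h1 : (B ^ m * Polynomial.aeval B q : Matrix (Fin k) (Fin k) ℂ) = 0 := by
      rw [hpq] at hCH
      simpa using hCH
    have h2 : (Polynomial.aeval B) q = ∑ j ∈ Finset.range (d + 1), c j • B ^ j :=
      Polynomial.aeval_eq_sum_range (p := q) B
    have h3 : (B ^ m * Polynomial.aeval B q).mulVec (w t)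
        = ∑ j ∈ Finset.range (d + 1), c j • (B ^ (m + j)).mulVec (w t) := by
      rw [h2, Finset.mul_sum, sum_mulVec']
      refine Finset.sum_congr rfl fun j _ => ?_
      rw [mul_smul_comm, ← pow_add, Matrix.smul_mulVec]
    rw [← h3, h1, Matrix.zero_mulVec]
  -- Step 3: Gronwall
  set u : ℝ → Fin k → ℂ := fun t => (B ^ m).mulVec (w t) with hu
  set clamp : ℝ → ℝ := fun s => max a (min s b) with hclamp
  have hclamp_mem : ∀ s, clamp s ∈ Icc a b :=
    fun s => ⟨le_max_left _ _, max_le hab (min_le_right _ _)⟩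
  have hclamp_id : ∀ s ∈ Icc a b, clamp s = s := by
    intro s hs
    show max a (min s b) = s
    rw [min_eq_left hs.2, max_eq_right hs.1]
  have hclamp_cont : Continuous clamp := by fun_prop
  set v : ℝ → ℝ := fun s => ‖u (clamp s)‖ with hv
  have hvc : Continuous v := by
    have : Continuous fun s => u (clamp s) :=
      (mulVec_continuousOn (B ^ m) hwc).comp_continuous hclamp_cont hclamp_mem
    exact this.norm
  have hv0 : ∀ s, 0 ≤ v s := fun s => norm_nonneg _
  set φ : ℝ → ℝ := fun t => ∫ s in a..t, v s with hφ
  have hφd : ∀ t : ℝ, HasDerivAt φ (v t) t := fun t =>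
    intervalIntegral.integral_hasDerivAt_right (hvc.intervalIntegrable a t)
      (hvc.stronglyMeasurableAtFilter _ _) hvc.continuousAt
  have hφc : Continuous φ := Differentiable.continuous (fun t => (hφd t).differentiableAt)
  have hφmono : ∀ {s t : ℝ}, s ≤ t → φ s ≤ φ t := by
    intro s t hst
    have h1 : φ t = φ s + ∫ τ in s..t, v τ :=
      (intervalIntegral.integral_add_adjacent_intervals
        (hvc.intervalIntegrable a s) (hvc.intervalIntegrable s t)).symm
    rw [h1]
    have : 0 ≤ ∫ τ in s..t, v τ :=
      intervalIntegral.integral_nonneg hst (fun τ _ => hv0 τ)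
    linarith
  have hφa : φ a = 0 := intervalIntegral.integral_same
  have hφnonneg : ∀ t, a ≤ t → 0 ≤ φ t := fun t ht => hφa ▸ hφmono ht
  have hφv : ∀ t ∈ Icc a b, v t = ‖u t‖ := by
    intro t ht
    show ‖u (clamp t)‖ = ‖u t‖
    rw [hclamp_id t ht]
  have hveq : ∀ t ∈ Icc a b, (∫ s in a..t, ‖u s‖) = φ t := by
    intro t ht
    show (∫ s in a..t, ‖u s‖) = ∫ s in a..t, v s
    apply intervalIntegral.integral_congr
    intro s hs
    rw [uIcc_of_le ht.1] at hs
    exact (hφv s ⟨hs.1, hs.2.trans ht.2⟩).symm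
  set K : ℝ := max (b - a) 1 with hK
  have hK0 : (0:ℝ) ≤ K := le_trans zero_le_one (le_max_right _ _)
  have hKba : b - a ≤ K := le_max_left _ _
  have hK1 : (1:ℝ) ≤ K := le_max_right _ _
  have hbound : ∀ j : ℕ, ∀ t ∈ Icc a b, ‖(B ^ (m + j + 1)).mulVec (w t)‖ ≤ K ^ j * φ t := by
    intro j
    induction j with
    | zero =>
      intro t ht
      rw [pow_zero, one_mul, Nat.add_zero, ← hint m t ht]
      calc ‖∫ s in a..t, (B ^ m).mulVec (w s)‖ ≤ ∫ s in a..t, ‖(B ^ m).mulVec (w s)‖ :=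
            intervalIntegral.norm_integral_le_integral_norm ht.1
        _ = φ t := hveq t ht
    | succ j ih =>
      intro t ht
      have h1 : (B ^ (m + (j+1) + 1)).mulVec (w t)
          = ∫ s in a..t, (B ^ (m + j + 1)).mulVec (w s) := by
        rw [hint (m + j + 1) t ht]
        ring_nf
      rw [h1]
      have hsub : Icc a t ⊆ Icc a b := Icc_subset_Icc le_rfl ht.2
      have hicont : ContinuousOn (fun s => ‖(B ^ (m + j + 1)).mulVec (w s)‖) (Icc a t) :=
        ((mulVec_continuousOn _ hwc).mono hsub).norm
      have hii1 : IntervalIntegrable (fun s => ‖(B ^ (m + j + 1)).mulVec (w s)‖)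
          MeasureTheory.volume a t :=
        (hicont.mono (by rw [uIcc_of_le ht.1])).intervalIntegrable
      have hii2 : IntervalIntegrable (fun _ : ℝ => K ^ j * φ t) MeasureTheory.volume a t :=
        intervalIntegrable_const
      calc ‖∫ s in a..t, (B ^ (m + j + 1)).mulVec (w s)‖
          ≤ ∫ s in a..t, ‖(B ^ (m + j + 1)).mulVec (w s)‖ :=
            intervalIntegral.norm_integral_le_integral_norm ht.1
        _ ≤ ∫ _ in a..t, K ^ j * φ t := by
            apply intervalIntegral.integral_mono_on ht.1 hii1 hii2
            intro x hx
            have hx' : x ∈ Icc a b := hsub hx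
            exact (ih x hx').trans
              (mul_le_mul_of_nonneg_left (hφmono hx.2) (pow_nonneg hK0 j))
        _ = (t - a) * (K ^ j * φ t) := by rw [intervalIntegral.integral_const]; simp
        _ ≤ K * (K ^ j * φ t) := by
            apply mul_le_mul_of_nonneg_right _ (mul_nonneg (pow_nonneg hK0 j)
              (hφnonneg t ht.1))
            have : t - a ≤ b - a := by linarith [ht.2]
            exact this.trans hKba
        _ = K ^ (j + 1) * φ t := by ring
  set C : ℝ := ‖c 0‖⁻¹ * ∑ j ∈ Finset.range d, ‖c (j + 1)‖ * K ^ j with hC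
  have hC0 : 0 ≤ C := by
    apply mul_nonneg (inv_nonneg.mpr (norm_nonneg _))
    exact Finset.sum_nonneg fun j _ => mul_nonneg (norm_nonneg _) (pow_nonneg hK0 j)
  have huφ : ∀ t ∈ Icc a b, ‖u t‖ ≤ C * φ t := by
    intro t ht
    have h0 := hrel t ht
    rw [Finset.sum_range_succ'] at h0
    simp only [← Nat.add_assoc, Nat.add_zero] at h0
    have hc0 : ‖c 0‖ ≠ 0 := norm_ne_zero_iff.mpr hq0
    have hg0 : c 0 • u t = -∑ j ∈ Finset.range d, c (j + 1) • (B ^ (m + j + 1)).mulVec (w t) :=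
      eq_neg_of_add_eq_zero_right h0
    have hnorm : ‖c 0 • u t‖ ≤ ‖c 0‖ * (C * φ t) := by
      rw [hg0, norm_neg]
      calc ‖∑ j ∈ Finset.range d, c (j + 1) • (B ^ (m + j + 1)).mulVec (w t)‖
          ≤ ∑ j ∈ Finset.range d, ‖c (j + 1) • (B ^ (m + j + 1)).mulVec (w t)‖ :=
            norm_sum_le _ _
        _ ≤ ∑ j ∈ Finset.range d, ‖c (j + 1)‖ * (K ^ j * φ t) := by
            apply Finset.sum_le_sum
            intro j _
            rw [norm_smul]
            exact mul_le_mul_of_nonneg_left (hbound j t ht) (norm_nonneg _)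
        _ = (∑ j ∈ Finset.range d, ‖c (j + 1)‖ * K ^ j) * φ t := by
            rw [Finset.sum_mul]
            exact Finset.sum_congr rfl fun j _ => by ring
        _ = ‖c 0‖ * ((‖c 0‖⁻¹ * ∑ j ∈ Finset.range d, ‖c (j + 1)‖ * K ^ j) * φ t) := by
            rw [← mul_assoc, ← mul_assoc, mul_inv_cancel₀ hc0, one_mul]
        _ = ‖c 0‖ * (C * φ t) := by rw [hC]
    rw [norm_smul] at hnorm
    calc ‖u t‖ = ‖c 0‖⁻¹ * (‖c 0‖ * ‖u t‖) := by
          rw [← mul_assoc, inv_mul_cancel₀ hc0, one_mul]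
      _ ≤ ‖c 0‖⁻¹ * (‖c 0‖ * (C * φ t)) := by
          apply mul_le_mul_of_nonneg_left hnorm (inv_nonneg.mpr (norm_nonneg _))
      _ = C * φ t := by rw [← mul_assoc, inv_mul_cancel₀ hc0, one_mul]
  have hφzero : ∀ t ∈ Icc a b, φ t = 0 := by
    intro t ht
    have hgr := norm_le_gronwallBound_of_norm_deriv_right_le (f := φ) (f' := v)
      (δ := 0) (K := C) (ε := 0) (a := a) (b := b) hφc.continuousOn
      (fun x _ => (hφd x).hasDerivWithinAt)
      (by rw [hφa, norm_zero])
      (fun x hx => by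
        have hx' : x ∈ Icc a b := ⟨hx.1, hx.2.le⟩
        rw [Real.norm_eq_abs, Real.norm_eq_abs, abs_of_nonneg (hv0 x),
          abs_of_nonneg (hφnonneg x hx.1), add_zero, hφv x hx']
        exact huφ x hx')
      t ht
    rw [gronwallBound_ε0_δ0] at hgr
    have := hφnonneg t ht.1
    rw [Real.norm_eq_abs, abs_of_nonneg this] at hgr
    linarith
  have hu0 : ∀ t ∈ Icc a b, u t = 0 := by
    intro t ht
    have h1 := huφ t ht
    rw [hφzero t ht, mul_zero] at h1
    exact norm_le_zero_iff.mp h1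
  -- Step 4: downward induction
  have hstep : ∀ n : ℕ, (∀ t ∈ Icc a b, (B ^ (n + 1)).mulVec (w t) = 0) →
      ∀ t ∈ Icc a b, (B ^ n).mulVec (w t) = 0 := by
    intro n h t ht
    have hz : HasDerivWithinAt (fun τ => (B ^ (n + 1)).mulVec (w τ)) 0 (Icc a b) t :=
      (hasDerivWithinAt_const t (Icc a b) (0 : Fin k → ℂ)).congr
        (fun x hx => h x hx) (h t ht)
    have hd : HasDerivWithinAt (fun τ => (B ^ (n + 1)).mulVec (w τ))
        ((B ^ (n + 1)).mulVec (ω t)) (Icc a b) t :=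
      mulVec_hasDerivWithinAt _ (hwderiv t ht)
    have hy : (B ^ (n + 1)).mulVec (ω t) = 0 :=
      (hd.derivWithin (hus t ht)).symm.trans (hz.derivWithin (hus t ht))
    have heq : (B ^ n).mulVec (w t) = (B ^ (n + 1)).mulVec (ω t) := by
      rw [pow_succ, ← Matrix.mulVec_mulVec, hkey t ht]
    rw [heq, hy]
  have hwzero : ∀ n : ℕ, (∀ t ∈ Icc a b, (B ^ n).mulVec (w t) = 0) →
      ∀ t ∈ Icc a b, w t = 0 := by
    intro n
    induction n with
    | zero => intro h t ht; simpa [Matrix.one_mulVec] using h t ht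
    | succ n ih => intro h; exact ih (hstep n h)
  have hwz := hwzero m hu0
  intro t ht
  have h1 := hwz t ht
  rw [hw] at h1
  have h2 : ζ t = 0 := by
    rcases smul_eq_zero.mp h1 with h | h
    · exact absurd h (Complex.exp_ne_zero _)
    · exact h
  have := sub_eq_zero.mp (by rw [hζ] at h2; exact h2)
  exact this
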